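/- Let ρ and σ be positive semidefinite n×n complex matrices with trace 1 and with the support of ρ contained in the support of σ. For α > 1, define D̃_α(ρ‖σ) = (1/(α-1)) log Tr[(σ^((1-α)/(2α)) ρ σ^((1-α)/(2α)))^α], where powers of σ are taken on its support. Then D̃_α(ρ‖σ) ≥ 0, with equality if and only if ρ = σ. -/

import Mathlib

open Matrix
open scoped ComplexOrder

/-- Real power of a Hermitian matrix via the spectral theorem (junk value `0` if not
Hermitian). Powers are taken on the support: zero eigenvalues are sent to `0 ^ t`. -/
noncomputable def Matrix.rpowH {m : Type*} [Fintype m] [DecidableEq m]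
    (A : Matrix m m ℂ) (t : ℝ) : Matrix m m ℂ :=
  if hA : A.IsHermitian then
    (hA.eigenvectorUnitary : Matrix m m ℂ) *
      Matrix.diagonal (fun i => ((hA.eigenvalues i ^ t : ℝ) : ℂ)) *
      star (hA.eigenvectorUnitary : Matrix m m ℂ)
  else 0

/-- The sandwiched Rényi relative `α`-entropy
`D̃_α(ρ‖σ) = (α-1)⁻¹ log Tr[(σ^((1-α)/(2α)) ρ σ^((1-α)/(2α)))^α]`. -/
noncomputable def sandwichedRenyi {m : Type*} [Fintype m] [DecidableEq m]
    (α : ℝ) (ρ σ : Matrix m m ℂ) : ℝ :=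
  (α - 1)⁻¹ *
    Real.log (Matrix.trace
      (Matrix.rpowH (Matrix.rpowH σ ((1 - α) / (2 * α)) * ρ *
        Matrix.rpowH σ ((1 - α) / (2 * α))) α)).re

set_option linter.unusedSectionVars false

namespace SRhelp
variable {m : Type*} [Fintype m] [DecidableEq m]

noncomputable def cd (d : m → ℝ) : Matrix m m ℂ := Matrix.diagonal (fun i => (d i : ℂ))

lemma cd_mul_cd (d e : m → ℝ) : cd d * cd e = cd (fun i => d i * e i) := by
  simp only [cd, diagonal_mul_diagonal, ← Complex.ofReal_mul]

lemma cd_herm (d : m → ℝ) : (cd d)ᴴ = cd d := by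
  simp [cd, diagonal_conjTranspose, Function.comp, Complex.conj_ofReal]

lemma conj3_mul_conj3 {V : Matrix m m ℂ} (hV : star V * V = 1) (d e : m → ℝ) :
    (V * cd d * star V) * (V * cd e * star V) = V * cd (fun i => d i * e i) * star V := by
  rw [← cd_mul_cd]
  calc (V * cd d * star V) * (V * cd e * star V)
      = V * cd d * ((star V * V) * (cd e * star V)) := by simp only [mul_assoc]
    _ = V * (cd d * cd e) * star V := by rw [hV, one_mul]; simp only [mul_assoc]

lemma conj3_herm {V : Matrix m m ℂ} (d : m → ℝ) : (V * cd d * star V)ᴴ = V * cd d * star V := by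
  simp only [conjTranspose_mul, cd_herm, star_eq_conjTranspose, conjTranspose_conjTranspose]
  simp only [mul_assoc]

lemma trace_conj3 {V : Matrix m m ℂ} (hV : star V * V = 1) (d : m → ℝ) :
    (V * cd d * star V).trace = ((∑ i, d i : ℝ) : ℂ) := by
  rw [trace_mul_cycle, hV, one_mul]
  simp [cd, trace_diagonal]

lemma diag_comm_of_conj_eq {U V : Matrix m m ℂ} (hU : star U * U = 1) (hV : star V * V = 1)
    {a b : m → ℝ} (h : U * cd a * star U = V * cd b * star V) :
    cd a * (star U * V) = (star U * V) * cd b := by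
  calc cd a * (star U * V) = (star U * U) * cd a * (star U * V) := by rw [hU, one_mul]
    _ = star U * (U * cd a * star U) * V := by simp only [mul_assoc]
    _ = star U * (V * cd b * star V) * V := by rw [h]
    _ = (star U * V) * cd b * (star V * V) := by simp only [mul_assoc]
    _ = (star U * V) * cd b := by rw [hV, mul_one]

lemma conj_eq_of_diag_comm {U V : Matrix m m ℂ} (hU : U * star U = 1) (hV : V * star V = 1)
    {a b : m → ℝ} (h : cd a * (star U * V) = (star U * V) * cd b) :
    U * cd a * star U = V * cd b * star V := by
  have h1 : U * (star U * V) = V := by rw [← mul_assoc, hU, one_mul]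
  have h2 : (star U * V) * star V = star U := by rw [mul_assoc, hV, mul_one]
  calc U * cd a * star U = U * cd a * ((star U * V) * star V) := by rw [h2]
    _ = U * (cd a * (star U * V)) * star V := by simp only [mul_assoc]
    _ = U * ((star U * V) * cd b) * star V := by rw [h]
    _ = (U * (star U * V)) * (cd b * star V) := by simp only [mul_assoc]
    _ = V * cd b * star V := by rw [h1, mul_assoc]

lemma entry_eq_of_diag_comm {W : Matrix m m ℂ} {a b : m → ℝ}
    (h : cd a * W = W * cd b) (i j : m) (hW : W i j ≠ 0) : a i = b j := by
  have he : (a i : ℂ) * W i j = W i j * (b j : ℂ) := by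
    have := Matrix.ext_iff.mpr h i j
    simpa [cd, Matrix.diagonal_mul, Matrix.mul_diagonal] using this
  rw [mul_comm (W i j)] at he
  exact_mod_cast mul_right_cancel₀ hW he

lemma diag_comm_of_entry_eq {W : Matrix m m ℂ} {a b : m → ℝ}
    (h : ∀ i j, W i j ≠ 0 → a i = b j) : cd a * W = W * cd b := by
  ext i j
  simp only [cd, Matrix.diagonal_mul, Matrix.mul_diagonal]
  by_cases hW : W i j = 0
  · simp [hW]
  · rw [h i j hW, mul_comm]

lemma transport {U V : Matrix m m ℂ} (hU1 : star U * U = 1) (hU2 : U * star U = 1)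
    (hV1 : star V * V = 1) (hV2 : V * star V = 1) {a b : m → ℝ}
    (h : U * cd a * star U = V * cd b * star V) (f : ℝ → ℝ) :
    U * cd (fun i => f (a i)) * star U = V * cd (fun i => f (b i)) * star V :=
  conj_eq_of_diag_comm hU2 hV2 (diag_comm_of_entry_eq fun i j hW =>
    congrArg f (entry_eq_of_diag_comm (diag_comm_of_conj_eq hU1 hV1 h) i j hW))

lemma trace_sandwich (W : Matrix m m ℂ) (a b : m → ℝ) :
    (cd a * W * cd b * star W).trace
      = ((∑ i, ∑ j, a i * b j * Complex.normSq (W i j) : ℝ) : ℂ) := by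
  have key : ∀ i, (cd a * W * cd b * star W) i i
      = ∑ j, ((a i * b j * Complex.normSq (W i j) : ℝ) : ℂ) := by
    intro i
    rw [Matrix.mul_apply]
    refine Finset.sum_congr rfl fun j _ => ?_
    have h1 : (cd a * W * cd b) i j = (a i : ℂ) * W i j * (b j : ℂ) := by
      simp [cd, Matrix.mul_diagonal, Matrix.diagonal_mul]
    rw [h1, Matrix.star_apply]
    calc (a i : ℂ) * W i j * (b j : ℂ) * star (W i j)
        = (a i : ℂ) * (b j : ℂ) * (W i j * star (W i j)) := by ring
      _ = ((a i * b j * Complex.normSq (W i j) : ℝ) : ℂ) := by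
          rw [Complex.star_def, Complex.mul_conj]; push_cast; ring
  simp only [Matrix.trace, Matrix.diag]
  rw [Finset.sum_congr rfl fun i _ => key i]
  push_cast
  rfl

lemma trace_conj_mul_conj (U V : Matrix m m ℂ) (a b : m → ℝ) :
    ((U * cd a * star U) * (V * cd b * star V)).trace
      = ((∑ i, ∑ j, a i * b j * Complex.normSq ((star U * V) i j) : ℝ) : ℂ) := by
  rw [← trace_sandwich (star U * V) a b]
  have hsW : star (star U * V) = star V * U := by rw [Matrix.star_mul, star_star]
  calc ((U * cd a * star U) * (V * cd b * star V)).trace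
      = (U * (cd a * (star U * V) * cd b * star V)).trace := by simp only [mul_assoc]
    _ = ((cd a * (star U * V) * cd b * star V) * U).trace := trace_mul_comm _ _
    _ = (cd a * (star U * V) * cd b * (star V * U)).trace := by simp only [mul_assoc]
    _ = (cd a * (star U * V) * cd b * star (star U * V)).trace := by rw [hsW]

lemma row_sum_one {W : Matrix m m ℂ} (hW : W * star W = 1) (i : m) :
    ∑ j, Complex.normSq (W i j) = 1 := by
  have h := Matrix.ext_iff.mpr hW i i
  rw [Matrix.mul_apply] at h
  rw [Matrix.one_apply_eq] at h
  have h2 : ∑ j, ((Complex.normSq (W i j) : ℝ) : ℂ) = 1 := by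
    rw [← h]
    exact Finset.sum_congr rfl fun j _ => by
      rw [Matrix.star_apply, Complex.star_def, Complex.mul_conj]
  exact_mod_cast h2

lemma col_sum_one {W : Matrix m m ℂ} (hW : star W * W = 1) (j : m) :
    ∑ i, Complex.normSq (W i j) = 1 := by
  have h := Matrix.ext_iff.mpr hW j j
  rw [Matrix.mul_apply] at h
  rw [Matrix.one_apply_eq] at h
  have h2 : ∑ i, ((Complex.normSq (W i j) : ℝ) : ℂ) = 1 := by
    rw [← h]
    exact Finset.sum_congr rfl fun i _ => by
      rw [Matrix.star_apply, Complex.star_def, mul_comm, Complex.mul_conj]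
  exact_mod_cast h2

lemma amgm_strict {a b w : ℝ} (ha : 0 ≤ a) (hb : 0 ≤ b) (hw : 0 < w) (hw1 : w < 1)
    (hne : a ≠ b) : a ^ w * b ^ (1 - w) < w * a + (1 - w) * b := by
  have hw' : 0 < 1 - w := by linarith
  rcases eq_or_lt_of_le ha with h0 | ha'
  · have hb' : 0 < b := hb.lt_of_ne fun h => hne (h0.symm.trans h)
    rw [← h0, Real.zero_rpow hw.ne', zero_mul, mul_zero, zero_add]
    positivity
  rcases eq_or_lt_of_le hb with h0 | hb'
  · rw [← h0, Real.zero_rpow hw'.ne', mul_zero, mul_zero, add_zero]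
    positivity
  have hlog := strictConcaveOn_log_Ioi.2 (Set.mem_Ioi.mpr ha') (Set.mem_Ioi.mpr hb')
    hne hw hw' (by ring)
  simp only [smul_eq_mul] at hlog
  have hpos : 0 < w * a + (1 - w) * b := by positivity
  calc a ^ w * b ^ (1 - w)
      = Real.exp (w * Real.log a + (1 - w) * Real.log b) := by
        rw [Real.exp_add, Real.rpow_def_of_pos ha', Real.rpow_def_of_pos hb']
        ring_nf
    _ < Real.exp (Real.log (w * a + (1 - w) * b)) := Real.exp_lt_exp.mpr hlog
    _ = w * a + (1 - w) * b := Real.exp_log hpos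

lemma conj_exp {α : ℝ} (hα : 1 < α) : Real.HolderConjugate α (α / (α - 1)) := by
  exact (Real.holderConjugate_iff_eq_conjExponent hα).mpr rfl

lemma young {x y α : ℝ} (hx : 0 ≤ x) (hy : 0 ≤ y) (hα : 1 < α) :
    x * y ≤ x ^ α / α + y ^ (α / (α - 1)) / (α / (α - 1)) :=
  Real.young_inequality_of_nonneg hx hy (conj_exp hα)

lemma young_eq {x y α : ℝ} (hx : 0 ≤ x) (hy : 0 ≤ y) (hα : 1 < α)
    (h : x * y = x ^ α / α + y ^ (α / (α - 1)) / (α / (α - 1))) :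
    x ^ α = y ^ (α / (α - 1)) := by
  by_contra hne
  set β := α / (α - 1) with hβ
  have hα0 : 0 < α := by linarith
  have hβ0 : 0 < β := by rw [hβ]; apply div_pos (by linarith) (by linarith)
  have hw : (0:ℝ) < 1/α := by positivity
  have hw1 : 1/α < 1 := by rw [div_lt_one hα0]; linarith
  have key := amgm_strict (Real.rpow_nonneg hx α) (Real.rpow_nonneg hy β) hw hw1 hne
  have e1 : (x ^ α) ^ (1/α) = x := by
    rw [← Real.rpow_mul hx]; rw [mul_one_div, div_self hα0.ne', Real.rpow_one]
  have e2 : 1 - 1/α = 1/β := by rw [hβ]; field_simp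
  have e3 : (y ^ β) ^ (1 - 1/α) = y := by
    rw [e2, ← Real.rpow_mul hy, mul_one_div, div_self hβ0.ne', Real.rpow_one]
  rw [e1, e3, e2] at key
  rw [h] at key
  have : (1:ℝ)/α * x ^ α + 1/β * y ^ β = x ^ α / α + y ^ β / β := by ring
  linarith [key, this.ge]

lemma spectral_cd {A : Matrix m m ℂ} (hA : A.IsHermitian) :
    A = (hA.eigenvectorUnitary : Matrix m m ℂ) * cd hA.eigenvalues *
      star (hA.eigenvectorUnitary : Matrix m m ℂ) := by
  convert hA.spectral_theorem using 2
  simp [Unitary.conjStarAlgAut_apply, cd, Function.comp_def]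

lemma rpowH_eq {A : Matrix m m ℂ} (hA : A.IsHermitian) (t : ℝ) :
    A.rpowH t = (hA.eigenvectorUnitary : Matrix m m ℂ) *
      cd (fun i => hA.eigenvalues i ^ t) * star (hA.eigenvectorUnitary : Matrix m m ℂ) := by
  rw [Matrix.rpowH, dif_pos hA]
  rfl

end SRhelp

open SRhelp in
/-- Positivity of the sandwiched Rényi relative entropy, with equality iff `ρ = σ`. -/
theorem sandwichedRenyi_nonneg_and_eq_zero_iff {n : ℕ}
    (ρ σ : Matrix (Fin n) (Fin n) ℂ) (hρ : ρ.PosSemidef) (hσ : σ.PosSemidef)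
    (hρ1 : ρ.trace = 1) (hσ1 : σ.trace = 1)
    (hsupp : ∀ v : Fin n → ℂ, σ.mulVec v = 0 → ρ.mulVec v = 0)
    (α : ℝ) (hα : 1 < α) :
    0 ≤ sandwichedRenyi α ρ σ ∧ (sandwichedRenyi α ρ σ = 0 ↔ ρ = σ) := by
  classical
  have hα0 : (0:ℝ) < α := by linarith
  set c : ℝ := (1 - α) / (2 * α) with hc
  have hcne : c ≠ 0 := by
    rw [hc]; exact div_ne_zero (by linarith) (by linarith)
  set β : ℝ := α / (α - 1) with hβ
  have hβ0 : 0 < β := div_pos (by linarith) (by linarith)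
  -- σ spectral data
  have hσH : σ.IsHermitian := hσ.1
  set V : Matrix (Fin n) (Fin n) ℂ := (hσH.eigenvectorUnitary : Matrix (Fin n) (Fin n) ℂ)
    with hVdef
  set s : Fin n → ℝ := hσH.eigenvalues with hsdef
  have hV1 : star V * V = 1 := Matrix.mem_unitaryGroup_iff'.mp hσH.eigenvectorUnitary.2
  have hV2 : V * star V = 1 := Matrix.mem_unitaryGroup_iff.mp hσH.eigenvectorUnitary.2
  have hs0 : ∀ j, 0 ≤ s j := hσ.eigenvalues_nonneg
  have hσspec : σ = V * cd s * star V := spectral_cd hσH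
  have hsums : ∑ j, s j = 1 := by
    have := hσ1
    rw [hσspec, trace_conj3 hV1] at this
    exact_mod_cast this
  have hrpowσ : ∀ t : ℝ, Matrix.rpowH σ t = V * cd (fun j => s j ^ t) * star V :=
    fun t => rpowH_eq hσH t
  -- the sandwiched matrix A
  set T : Matrix (Fin n) (Fin n) ℂ := Matrix.rpowH σ ((1 - α) / (2 * α)) with hTdef
  have hT : T = V * cd (fun j => s j ^ c) * star V := hrpowσ c
  set A : Matrix (Fin n) (Fin n) ℂ := T * ρ * T with hAdef
  have hTH : Tᴴ = T := by rw [hT]; exact conj3_herm _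
  have hAps : A.PosSemidef := by
    have := hρ.conjTranspose_mul_mul_same T
    rwa [hTH] at this
  have hAH : A.IsHermitian := hAps.1
  set U : Matrix (Fin n) (Fin n) ℂ := (hAH.eigenvectorUnitary : Matrix (Fin n) (Fin n) ℂ)
    with hUdef
  set lam : Fin n → ℝ := hAH.eigenvalues with hlamdef
  have hU1 : star U * U = 1 := Matrix.mem_unitaryGroup_iff'.mp hAH.eigenvectorUnitary.2
  have hU2 : U * star U = 1 := Matrix.mem_unitaryGroup_iff.mp hAH.eigenvectorUnitary.2
  have hlam0 : ∀ i, 0 ≤ lam i := hAps.eigenvalues_nonneg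
  have hAspec : A = U * cd lam * star U := spectral_cd hAH
  set W : Matrix (Fin n) (Fin n) ℂ := star U * V with hWdef
  have hWrow : ∀ i, ∑ j, Complex.normSq (W i j) = 1 := by
    intro i
    refine row_sum_one ?_ i
    rw [hWdef, Matrix.star_mul, star_star]
    calc star U * V * (star V * U) = star U * (V * star V) * U := by simp only [mul_assoc]
      _ = 1 := by rw [hV2, mul_one, hU1]
  have hWcol : ∀ j, ∑ i, Complex.normSq (W i j) = 1 := by
    intro j
    refine col_sum_one ?_ j
    rw [hWdef, Matrix.star_mul, star_star]
    calc star V * U * (star U * V) = star V * (U * star U) * V := by simp only [mul_assoc]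
      _ = 1 := by rw [hU2, mul_one, hV1]
  -- key absorption lemma
  have hkey : ∀ χ : Fin n → ℝ, (∀ j, s j ≠ 0 → χ j = 1) → ρ * V * cd χ = ρ * V := by
    intro χ hχ
    ext i j
    by_cases hsj : s j = 0
    · have hcol : σ.mulVec (fun k => V k j) = 0 := by
        funext i'
        have : σ.mulVec (fun k => V k j) i' = (σ * V) i' j := by
          simp [Matrix.mulVec, Matrix.mul_apply, dotProduct]
        rw [this]
        have hσV : σ * V = V * cd s := by
          rw [hσspec]
          calc V * cd s * star V * V = V * cd s * (star V * V) := by simp only [mul_assoc]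
            _ = V * cd s := by rw [hV1, mul_one]
        rw [hσV]
        simp [cd, Matrix.mul_diagonal, hsj]
      have hρcol : ρ.mulVec (fun k => V k j) = 0 := hsupp _ hcol
      have hzero : (ρ * V) i j = 0 := by
        have : ρ.mulVec (fun k => V k j) i = (ρ * V) i j := by
          simp [Matrix.mulVec, Matrix.mul_apply, dotProduct]
        rw [← this, hρcol]
        rfl
      simp [cd, Matrix.mul_diagonal, hzero]
    · simp [cd, Matrix.mul_diagonal, hχ j hsj]
  have habs : ∀ χ : Fin n → ℝ, (∀ j, s j ≠ 0 → χ j = 1) → ρ * (V * cd χ * star V) = ρ := by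
    intro χ hχ
    calc ρ * (V * cd χ * star V) = (ρ * V * cd χ) * star V := by simp only [mul_assoc]
      _ = (ρ * V) * star V := by rw [hkey χ hχ]
      _ = ρ * (V * star V) := by simp only [mul_assoc]
      _ = ρ := by rw [hV2, mul_one]
  set μ : Fin n → ℝ := fun j => s j ^ ((α - 1) / α) with hμdef
  have hμ0 : ∀ j, 0 ≤ μ j := fun j => Real.rpow_nonneg (hs0 j) _
  set B : Matrix (Fin n) (Fin n) ℂ := V * cd μ * star V with hBdef
  have hTBT : T * B * T = V * cd (fun j => (s j ^ c * μ j) * s j ^ c) * star V := by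
    rw [hT, hBdef, conj3_mul_conj3 hV1, conj3_mul_conj3 hV1]
  have hchi1 : ∀ j, s j ≠ 0 → (s j ^ c * μ j) * s j ^ c = 1 := by
    intro j hj
    have hpos : 0 < s j := (hs0 j).lt_of_ne (Ne.symm hj)
    have hμj : μ j = s j ^ ((α - 1) / α) := rfl
    rw [hμj, ← Real.rpow_add hpos, ← Real.rpow_add hpos]
    rw [show c + (α - 1) / α + c = 0 by rw [hc]; field_simp; ring]
    exact Real.rpow_zero _
  have htrAB : (A * B).trace = 1 := by
    calc (A * B).trace = ((T * ρ) * (T * B)).trace := by rw [hAdef]; simp only [mul_assoc]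
      _ = ((T * B) * (T * ρ)).trace := trace_mul_comm _ _
      _ = ((T * B * T) * ρ).trace := by simp only [mul_assoc]
      _ = (ρ * (T * B * T)).trace := trace_mul_comm _ _
      _ = ρ.trace := by rw [hTBT, habs _ hchi1]
      _ = 1 := hρ1
  have htrAB2 : (A * B).trace
      = ((∑ i, ∑ j, lam i * μ j * Complex.normSq (W i j) : ℝ) : ℂ) := by
    rw [hAspec, hBdef]
    exact trace_conj_mul_conj U V lam μ
  have hsum1 : ∑ i, ∑ j, lam i * μ j * Complex.normSq (W i j) = 1 := by
    have h := htrAB2.symm.trans htrAB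
    exact_mod_cast h
  have hμβ : ∀ j, μ j ^ β = s j := by
    intro j
    have hμj : μ j = s j ^ ((α - 1) / α) := rfl
    by_cases hj : s j = 0
    · rw [hμj, hj, Real.zero_rpow (div_ne_zero (by linarith) (by linarith)), Real.zero_rpow hβ0.ne']
    · have hpos : 0 < s j := (hs0 j).lt_of_ne (Ne.symm hj)
      rw [hμj, ← Real.rpow_mul (hs0 j)]
      rw [show (α - 1) / α * β = 1 by
        rw [hβ, div_mul_div_comm, mul_comm]
        exact div_self (by nlinarith)]
      exact Real.rpow_one _
  set Q : ℝ := ∑ i, lam i ^ α with hQdef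
  have hrpA : Matrix.rpowH A α = U * cd (fun i => lam i ^ α) * star U := rpowH_eq hAH α
  have htrQ : (Matrix.rpowH A α).trace = ((Q : ℝ) : ℂ) := by rw [hrpA, trace_conj3 hU1]
  have hSR : sandwichedRenyi α ρ σ = (α - 1)⁻¹ * Real.log Q := by
    simp only [sandwichedRenyi]
    have hAA : Matrix.rpowH σ ((1 - α) / (2 * α)) * ρ * Matrix.rpowH σ ((1 - α) / (2 * α)) = A :=
      rfl
    rw [hAA, htrQ, Complex.ofReal_re]
  have hXY : ∑ i, ∑ j, (lam i ^ α / α + μ j ^ β / β) * Complex.normSq (W i j)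
      = Q / α + 1 / β := by
    have e : ∀ i j, (lam i ^ α / α + μ j ^ β / β) * Complex.normSq (W i j)
        = lam i ^ α / α * Complex.normSq (W i j) + μ j ^ β / β * Complex.normSq (W i j) := by
      intro i j; ring
    calc ∑ i, ∑ j, (lam i ^ α / α + μ j ^ β / β) * Complex.normSq (W i j)
        = (∑ i, ∑ j, lam i ^ α / α * Complex.normSq (W i j))
          + (∑ i, ∑ j, μ j ^ β / β * Complex.normSq (W i j)) := by
          rw [← Finset.sum_add_distrib]
          refine Finset.sum_congr rfl fun i _ => ?_
          rw [← Finset.sum_add_distrib]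
          exact Finset.sum_congr rfl fun j _ => e i j
      _ = Q / α + 1 / β := by
          congr 1
          · rw [hQdef, Finset.sum_div]
            refine Finset.sum_congr rfl fun i _ => ?_
            rw [← Finset.mul_sum, hWrow i, mul_one]
          · rw [Finset.sum_comm]
            calc ∑ j, ∑ i, μ j ^ β / β * Complex.normSq (W i j)
                = ∑ j, μ j ^ β / β := by
                  refine Finset.sum_congr rfl fun j _ => ?_
                  rw [← Finset.mul_sum, hWcol j, mul_one]
              _ = (∑ j, s j) / β := by
                  rw [Finset.sum_div]
                  exact Finset.sum_congr rfl fun j _ => by rw [hμβ j]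
              _ = 1 / β := by rw [hsums]
  have hQ1 : 1 ≤ Q / α + 1 / β := by
    rw [← hXY, ← hsum1]
    refine Finset.sum_le_sum fun i _ => Finset.sum_le_sum fun j _ => ?_
    exact mul_le_mul_of_nonneg_right (young (hlam0 i) (hμ0 j) hα) (Complex.normSq_nonneg _)
  have hβinv : 1 / β = (α - 1) / α := by rw [hβ]; field_simp
  have hQge : 1 ≤ Q := by
    rw [hβinv, ← add_div] at hQ1
    have h2 := (one_le_div hα0).mp hQ1
    linarith
  have hαm1 : (0:ℝ) < α - 1 := by linarith
  refine ⟨by rw [hSR]; exact mul_nonneg (inv_nonneg.mpr hαm1.le) (Real.log_nonneg hQge), ?_, ?_⟩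
  · -- equality implies ρ = σ
    intro h0
    have hlogQ : Real.log Q = 0 := by
      rw [hSR] at h0
      rcases mul_eq_zero.mp h0 with h | h
      · exact absurd h (inv_ne_zero hαm1.ne')
      · exact h
    have hQeq : Q = 1 := by
      rcases Real.log_eq_zero.mp hlogQ with h | h | h
      · linarith
      · exact h
      · linarith
    -- all Young terms are tight
    have hgsum : ∑ i, ∑ j, Complex.normSq (W i j) * (lam i ^ α / α + μ j ^ β / β - lam i * μ j)
        = 0 := by
      have e : ∀ i j : Fin n, Complex.normSq (W i j) * (lam i ^ α / α + μ j ^ β / β - lam i * μ j)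
          = (lam i ^ α / α + μ j ^ β / β) * Complex.normSq (W i j)
            - lam i * μ j * Complex.normSq (W i j) := by intro i j; ring
      calc ∑ i, ∑ j, Complex.normSq (W i j) * (lam i ^ α / α + μ j ^ β / β - lam i * μ j)
          = (∑ i, ∑ j, (lam i ^ α / α + μ j ^ β / β) * Complex.normSq (W i j))
            - ∑ i, ∑ j, lam i * μ j * Complex.normSq (W i j) := by
            rw [← Finset.sum_sub_distrib]
            refine Finset.sum_congr rfl fun i _ => ?_
            rw [← Finset.sum_sub_distrib]
            exact Finset.sum_congr rfl fun j _ => e i j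
        _ = 0 := by
            rw [hXY, hsum1, hQeq, hβinv]
            field_simp
            ring
    have hg0 : ∀ i j, Complex.normSq (W i j)
        * (lam i ^ α / α + μ j ^ β / β - lam i * μ j) = 0 := by
      have hnn : ∀ i j : Fin n, 0 ≤ Complex.normSq (W i j)
          * (lam i ^ α / α + μ j ^ β / β - lam i * μ j) := fun i j =>
        mul_nonneg (Complex.normSq_nonneg _)
          (sub_nonneg.mpr (young (hlam0 i) (hμ0 j) hα))
      intro i j
      have houter := (Finset.sum_eq_zero_iff_of_nonneg
        (fun i _ => Finset.sum_nonneg fun j _ => hnn i j)).mp hgsum i (Finset.mem_univ i)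
      exact (Finset.sum_eq_zero_iff_of_nonneg (fun j _ => hnn i j)).mp houter j
        (Finset.mem_univ j)
    have hlamval : ∀ i j, W i j ≠ 0 → lam i = s j ^ (1 / α) := by
      intro i j hW
      have hc0 : Complex.normSq (W i j) ≠ 0 := fun h => hW (Complex.normSq_eq_zero.mp h)
      have hyeq : lam i * μ j = lam i ^ α / α + μ j ^ (α / (α - 1)) / (α / (α - 1)) := by
        rcases mul_eq_zero.mp (hg0 i j) with h | h
        · exact absurd h hc0
        · rw [← hβ]; linarith
      have h1 : lam i ^ α = μ j ^ (α / (α - 1)) := young_eq (hlam0 i) (hμ0 j) hα hyeq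
      have h2 : lam i ^ α = s j := by rw [h1, ← hβ]; exact hμβ j
      calc lam i = (lam i ^ α) ^ (1 / α) := by
            rw [← Real.rpow_mul (hlam0 i), mul_one_div, div_self hα0.ne', Real.rpow_one]
        _ = s j ^ (1 / α) := by rw [h2]
    have hcomm : cd lam * W = W * cd (fun j => s j ^ (1 / α)) :=
      diag_comm_of_entry_eq hlamval
    have hAeq : A = V * cd (fun j => s j ^ (1 / α)) * star V :=
      hAspec.trans (conj_eq_of_diag_comm hU2 hV2 hcomm)
    -- reconstruct ρ = σ
    set c' : ℝ := (α - 1) / (2 * α) with hc'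
    set S : Matrix (Fin n) (Fin n) ℂ := V * cd (fun j => s j ^ c') * star V with hSdef
    have hTS : T * S = V * cd (fun j => s j ^ c * s j ^ c') * star V := by
      rw [hT, hSdef, conj3_mul_conj3 hV1]
    have hST : S * T = V * cd (fun j => s j ^ c' * s j ^ c) * star V := by
      rw [hT, hSdef, conj3_mul_conj3 hV1]
    have hSTeq : S * T = T * S := by
      rw [hST, hTS]
      have : (fun j => s j ^ c' * s j ^ c) = (fun j => s j ^ c * s j ^ c') :=
        funext fun j => mul_comm _ _
      rw [this]
    have hind : ∀ j, s j ≠ 0 → s j ^ c * s j ^ c' = 1 := by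
      intro j hj
      have hpos : 0 < s j := (hs0 j).lt_of_ne (Ne.symm hj)
      rw [← Real.rpow_add hpos, show c + c' = 0 by rw [hc, hc']; ring, Real.rpow_zero]
    have hρTS : ρ * (T * S) = ρ := by rw [hTS]; exact habs _ hind
    have hρH : ρᴴ = ρ := hρ.1
    have hTSH : (T * S)ᴴ = T * S := by rw [hTS]; exact conj3_herm _
    have hTSρ : (T * S) * ρ = ρ := by
      have h := congrArg Matrix.conjTranspose hρTS
      rwa [Matrix.conjTranspose_mul, hTSH, hρH] at h
    have hρSAS : S * A * S = ρ := by
      calc S * A * S = (S * T) * ρ * (T * S) := by rw [hAdef]; simp only [mul_assoc]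
        _ = (T * S) * ρ * (T * S) := by rw [hSTeq]
        _ = ρ * (T * S) := by rw [hTSρ]
        _ = ρ := hρTS
    have hSAS : S * A * S = σ := by
      rw [hAeq, hSdef, conj3_mul_conj3 hV1, conj3_mul_conj3 hV1, hσspec]
      have hfs : (fun j => s j ^ c' * s j ^ (1 / α) * s j ^ c') = s := by
        funext j
        by_cases hj : s j = 0
        · rw [hj, Real.zero_rpow (by rw [hc']; exact div_ne_zero (by linarith) (by linarith)),
            Real.zero_rpow (by positivity)]
          ring
        · have hpos : 0 < s j := (hs0 j).lt_of_ne (Ne.symm hj)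
          rw [← Real.rpow_add hpos, ← Real.rpow_add hpos,
            show c' + 1 / α + c' = 1 by rw [hc']; field_simp; ring, Real.rpow_one]
      rw [hfs]
    exact hρSAS.symm.trans hSAS
  · -- ρ = σ implies equality
    intro h0
    have hAσ : A = V * cd (fun j => s j ^ c * s j * s j ^ c) * star V := by
      rw [hAdef, h0, hT, hσspec, conj3_mul_conj3 hV1, conj3_mul_conj3 hV1]
    have htrans := transport hU1 hU2 hV1 hV2 (hAspec.symm.trans hAσ) (fun x => x ^ α)
    have h1 : ((Q : ℝ) : ℂ) = ((∑ j, (s j ^ c * s j * s j ^ c) ^ α : ℝ) : ℂ) := by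
      rw [← trace_conj3 hU1 (fun i => lam i ^ α), htrans, trace_conj3 hV1]
    have h2 : ∑ j, (s j ^ c * s j * s j ^ c) ^ α = 1 := by
      rw [← hsums]
      refine Finset.sum_congr rfl fun j _ => ?_
      by_cases hj : s j = 0
      · rw [hj]
        rw [show (0:ℝ) ^ c * 0 * (0:ℝ) ^ c = 0 from by ring]
        exact Real.zero_rpow hα0.ne'
      · have hpos : 0 < s j := (hs0 j).lt_of_ne (Ne.symm hj)
        rw [show s j ^ c * s j * s j ^ c = s j ^ c * s j ^ (1:ℝ) * s j ^ c by
            rw [Real.rpow_one],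
          ← Real.rpow_add hpos, ← Real.rpow_add hpos, ← Real.rpow_mul (hs0 j),
          show (c + 1 + c) * α = 1 by
            rw [show c + 1 + c = 1 / α from by have hne : α ≠ 0 := hα0.ne'; rw [hc]; field_simp; ring, one_div,
              inv_mul_cancel₀ hα0.ne'], Real.rpow_one]
    have hQeq : Q = 1 := by
      have := h1
      rw [h2] at this
      exact_mod_cast this
    rw [hSR, hQeq, Real.log_one, mul_zero]
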